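/- arXiv:1906.04038 — 4 statements merged into one kernel-verified Lean document; each statement's English description precedes it below -/
import Mathlib

section
/- Fix d ≥ 1 and k ∈ {0,1,…,d}. For every y ∈ ℝ^d, the Capra conjugate of the characteristic function of the level set {x ∈ ℝ^d : ℓ0(x) ≤ k} equals the 2-k-symmetric gauge norm of y; explicitly, sup{ ¢(x,y) : x ∈ ℝ^d, ℓ0(x) ≤ k } = ‖y‖_(k), and the same identity holds for the coupling −¢ in place of ¢ (by symmetry of the level set). -/
noncomputable section

variable {d : ℕ}

/-- The projection `x_K` of `x` onto the coordinates in `K`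
(the components outside `K` vanish). -/
def restr (K : Finset (Fin d)) (x : EuclideanSpace ℝ (Fin d)) : EuclideanSpace ℝ (Fin d) :=
  WithLp.toLp 2 (fun i => if i ∈ K then x i else 0)

/-- The 2-k-symmetric gauge norm `‖y‖_(k) = sup {‖y_K‖ : |K| ≤ k}`
(equal to `0` for `k = 0`, by the convention `‖·‖_(0) = 0`). -/
def gaugeNorm (k : ℕ) (y : EuclideanSpace ℝ (Fin d)) : ℝ :=
  ⨆ K : {K : Finset (Fin d) // K.card ≤ k}, ‖restr (K : Finset (Fin d)) y‖

/-- The ℓ₀ pseudonorm: the number of nonzero components. -/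
def l0 (x : EuclideanSpace ℝ (Fin d)) : ℕ :=
  (Finset.univ.filter fun i => x i ≠ 0).card

open Classical in
/-- The Capra coupling `¢(x,y) = ⟨x,y⟩ / ‖x‖` for `x ≠ 0`, and `¢(0,y) = 0`. -/
def capra (x y : EuclideanSpace ℝ (Fin d)) : ℝ :=
  if x = 0 then 0 else (inner ℝ x y : ℝ) / ‖x‖

/-- The Capra conjugate of ℓ₀: `y ↦ max_{0 ≤ l ≤ d} (‖y‖_(l) − l)`. -/
def capraConjL0 (y : EuclideanSpace ℝ (Fin d)) : ℝ :=
  ⨆ l : Fin (d + 1), (gaugeNorm (l : ℕ) y - ((l : ℕ) : ℝ))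

/-- `L₀(x) = sup_y (⟨x,y⟩ − max_{0 ≤ l ≤ d}(‖y‖_(l) − l))`, with values in `ℝ̄ = EReal`. -/
def L0 (x : EuclideanSpace ℝ (Fin d)) : EReal :=
  ⨆ y : EuclideanSpace ℝ (Fin d), (((inner ℝ x y : ℝ) - capraConjL0 y : ℝ) : EReal)

/-- The k-support norm: the dual norm of the 2-k-symmetric gauge norm,
`‖y‖^sp_(k) = sup {⟨x,y⟩ : ‖x‖_(k) ≤ 1}`. -/
def suppNorm (k : ℕ) (y : EuclideanSpace ℝ (Fin d)) : ℝ :=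
  sSup {c : ℝ | ∃ x : EuclideanSpace ℝ (Fin d), gaugeNorm k x ≤ 1 ∧ c = (inner ℝ x y : ℝ)}

/-- The unit ball of the k-support norm, with the convention `B^sp_(0) = {0}`. -/
def Bsp (d k : ℕ) : Set (EuclideanSpace ℝ (Fin d)) :=
  if k = 0 then {0} else {y | suppNorm k y ≤ 1}

/-- The degenerate unit sphere `S_K = {x : x_{−K} = 0 and ‖x_K‖ = 1}`. -/
def sphK (K : Finset (Fin d)) : Set (EuclideanSpace ℝ (Fin d)) :=
  {x | (∀ i, i ∉ K → x i = 0) ∧ ‖restr K x‖ = 1}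

/-- The degenerate unit ball `B_K = {x : x_{−K} = 0 and ‖x_K‖ ≤ 1}`. -/
def ballK (K : Finset (Fin d)) : Set (EuclideanSpace ℝ (Fin d)) :=
  {x | (∀ i, i ∉ K → x i = 0) ∧ ‖restr K x‖ ≤ 1}


section Aux
variable {d : ℕ}

lemma restr_inner_eq (K : Finset (Fin d)) (x y : EuclideanSpace ℝ (Fin d)) :
    (inner ℝ (restr K x) y : ℝ) = (inner ℝ (restr K x) (restr K y) : ℝ) := by
  simp only [PiLp.inner_apply, RCLike.inner_apply, conj_trivial, restr, PiLp.toLp_apply]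
  refine Finset.sum_congr rfl fun i _ => ?_
  by_cases h : i ∈ K <;> simp [h]

lemma restr_inner_self (K : Finset (Fin d)) (y : EuclideanSpace ℝ (Fin d)) :
    (inner ℝ (restr K y) y : ℝ) = ‖restr K y‖ ^ 2 := by
  rw [← real_inner_self_eq_norm_sq]
  simp only [PiLp.inner_apply, RCLike.inner_apply, conj_trivial, restr, PiLp.toLp_apply]
  refine Finset.sum_congr rfl fun i _ => ?_
  by_cases h : i ∈ K <;> simp [h]

lemma restr_empty (y : EuclideanSpace ℝ (Fin d)) : restr ∅ y = 0 := by
  ext i; simp [restr]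

lemma l0_restr_le (K : Finset (Fin d)) (y : EuclideanSpace ℝ (Fin d)) :
    l0 (restr K y) ≤ K.card := by
  apply Finset.card_le_card
  intro i hi
  simp only [Finset.mem_filter, Finset.mem_univ, true_and, restr, PiLp.toLp_apply] at hi
  by_contra h
  simp [h] at hi

lemma restr_supp (x : EuclideanSpace ℝ (Fin d)) :
    restr (Finset.univ.filter fun i => x i ≠ 0) x = x := by
  ext i
  simp only [restr, Finset.mem_filter, Finset.mem_univ, true_and, PiLp.toLp_apply]
  by_cases h : x i = 0 <;> simp [h]

lemma le_gaugeNorm {k : ℕ} (K : Finset (Fin d)) (hK : K.card ≤ k)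
    (y : EuclideanSpace ℝ (Fin d)) : ‖restr K y‖ ≤ gaugeNorm k y := by
  unfold gaugeNorm
  exact le_ciSup (f := fun K : {K : Finset (Fin d) // K.card ≤ k} =>
      ‖restr (K : Finset (Fin d)) y‖)
    (Set.Finite.bddAbove (Set.finite_range _)) ⟨K, hK⟩

lemma gaugeNorm_nonneg (k : ℕ) (y : EuclideanSpace ℝ (Fin d)) : 0 ≤ gaugeNorm k y := by
  have := le_gaugeNorm (d := d) (k := k) ∅ (by simp) y
  rw [restr_empty] at this
  simpa using this

lemma capra_neg (x y : EuclideanSpace ℝ (Fin d)) : capra (-x) y = - capra x y := by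
  unfold capra
  by_cases h : x = 0
  · simp [h]
  · rw [if_neg (by simpa using h), if_neg h, inner_neg_left (𝕜 := ℝ), norm_neg]
    ring

lemma l0_neg (x : EuclideanSpace ℝ (Fin d)) : l0 (-x) = l0 x := by
  unfold l0
  congr 1
  apply Finset.filter_congr
  intro i _
  simp [PiLp.neg_apply]

end Aux

/-- the Capra conjugate of the characteristic function of the level set
`{x : ℓ₀(x) ≤ k}` equals the 2-k-symmetric gauge norm, i.e.
`sup {¢(x,y) : ℓ₀(x) ≤ k} = ‖y‖_(k)`, and the same identity holds with `−¢` in place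
of `¢`. -/
theorem capra_conjugate_char_level_set (d : ℕ) (hd : 1 ≤ d) (k : ℕ) (hk : k ≤ d)
    (y : EuclideanSpace ℝ (Fin d)) :
    sSup {c : ℝ | ∃ x : EuclideanSpace ℝ (Fin d), l0 x ≤ k ∧ c = capra x y}
        = gaugeNorm k y ∧
    sSup {c : ℝ | ∃ x : EuclideanSpace ℝ (Fin d), l0 x ≤ k ∧ c = - capra x y}
        = gaugeNorm k y := by
  classical
  set S := {c : ℝ | ∃ x : EuclideanSpace ℝ (Fin d), l0 x ≤ k ∧ c = capra x y} with hSdef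
  have h0S : (0 : ℝ) ∈ S := ⟨0, by simp [l0], by simp [capra]⟩
  have hub : ∀ c ∈ S, c ≤ gaugeNorm k y := by
    rintro c ⟨x, hx, rfl⟩
    by_cases hx0 : x = 0
    · simp only [capra, hx0, if_pos rfl]
      exact gaugeNorm_nonneg k y
    · rw [capra, if_neg hx0]
      set K := Finset.univ.filter fun i => x i ≠ 0 with hKdef
      have hxK : restr K x = x := restr_supp x
      have hcard : K.card ≤ k := hx
      have hnorm : (0 : ℝ) < ‖x‖ := norm_pos_iff.mpr hx0
      rw [div_le_iff₀ hnorm]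
      calc (inner ℝ x y : ℝ) = (inner ℝ (restr K x) (restr K y) : ℝ) := by
            rw [← restr_inner_eq, hxK]
        _ ≤ ‖restr K x‖ * ‖restr K y‖ := real_inner_le_norm _ _
        _ = ‖restr K y‖ * ‖x‖ := by rw [hxK]; ring
        _ ≤ gaugeNorm k y * ‖x‖ := by
            apply mul_le_mul_of_nonneg_right (le_gaugeNorm K hcard y) hnorm.le
  have hbdd : BddAbove S := ⟨gaugeNorm k y, hub⟩
  have hmem : ∀ K : Finset (Fin d), K.card ≤ k → ‖restr K y‖ ∈ S := by
    intro K hK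
    by_cases h : restr K y = 0
    · rw [h, norm_zero]; exact h0S
    · refine ⟨restr K y, le_trans (l0_restr_le K y) hK, ?_⟩
      rw [capra, if_neg h, restr_inner_self]
      have hn : (0 : ℝ) < ‖restr K y‖ := norm_pos_iff.mpr h
      field_simp
  have hmain : sSup S = gaugeNorm k y := by
    apply le_antisymm
    · exact csSup_le ⟨0, h0S⟩ hub
    · have : Nonempty {K : Finset (Fin d) // K.card ≤ k} := ⟨⟨∅, by simp⟩⟩
      refine ciSup_le fun K => le_csSup hbdd (hmem K K.2)
  constructor
  · exact hmain
  · have hset : {c : ℝ | ∃ x : EuclideanSpace ℝ (Fin d), l0 x ≤ k ∧ c = - capra x y} = S := by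
      ext c
      constructor
      · rintro ⟨x, hx, rfl⟩
        exact ⟨-x, by rw [l0_neg]; exact hx, by rw [capra_neg]⟩
      · rintro ⟨x, hx, rfl⟩
        exact ⟨-x, by rw [l0_neg]; exact hx, by rw [capra_neg, neg_neg]⟩
    rw [hset]
    exact hmain
end
end

section
/- Fix d ≥ 1. Define L₀ : ℝ^d → ℝ̄ by L₀(x) = sup_{y ∈ ℝ^d} ( ⟨x,y⟩ − max_{l ∈ {0,1,…,d}} ( ‖y‖_(l) − l ) ). Then L₀ is a proper convex lower semicontinuous function on ℝ^d, and the ℓ0 pseudonorm coincides with L₀ on the Euclidean unit sphere: ℓ0(x) = L₀(x) for every x ∈ ℝ^d with ‖x‖ = 1. -/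
noncomputable section

variable {d : ℕ}

namespace L0AuxSection
variable {d : ℕ}

lemma norm_restr (K : Finset (Fin d)) (x : EuclideanSpace ℝ (Fin d)) :
    ‖restr K x‖ = Real.sqrt (∑ i ∈ K, x i ^ 2) := by
  rw [EuclideanSpace.norm_eq]
  congr 1
  have : ∀ i, ‖restr K x i‖ ^ 2 = if i ∈ K then x i ^ 2 else 0 := by
    intro i; simp only [restr]; split <;> simp [sq_abs]
  simp_rw [this, Finset.sum_ite_mem, Finset.univ_inter]

lemma gauge_nonempty (k : ℕ) : Nonempty {K : Finset (Fin d) // K.card ≤ k} :=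
  ⟨⟨∅, by simp⟩⟩

lemma gauge_bdd (k : ℕ) (y : EuclideanSpace ℝ (Fin d)) :
    BddAbove (Set.range fun K : {K : Finset (Fin d) // K.card ≤ k} =>
      ‖restr (K : Finset (Fin d)) y‖) :=
  Set.Finite.bddAbove (Set.finite_range _)

lemma gaugeNorm_le {k : ℕ} {y : EuclideanSpace ℝ (Fin d)} {c : ℝ}
    (h : ∀ K : Finset (Fin d), K.card ≤ k → ‖restr K y‖ ≤ c) : gaugeNorm k y ≤ c := by
  have := gauge_nonempty (d := d) k
  exact ciSup_le fun K => h K K.2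

lemma le_gaugeNorm {k : ℕ} {y : EuclideanSpace ℝ (Fin d)} {K : Finset (Fin d)}
    (hK : K.card ≤ k) : ‖restr K y‖ ≤ gaugeNorm k y :=
  le_ciSup (gauge_bdd k y) ⟨K, hK⟩

lemma norm_restr_le_norm (K : Finset (Fin d)) (y : EuclideanSpace ℝ (Fin d)) :
    ‖restr K y‖ ≤ ‖y‖ := by
  have h : ∀ i, ‖restr K y i‖ ^ 2 ≤ ‖y i‖ ^ 2 := by
    intro i
    show ‖(if i ∈ K then y i else 0)‖ ^ 2 ≤ _
    split <;> simp [sq_nonneg]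
  rw [EuclideanSpace.norm_eq, EuclideanSpace.norm_eq]
  exact Real.sqrt_le_sqrt (Finset.sum_le_sum fun i _ => h i)

lemma restr_zero (K : Finset (Fin d)) : restr K (0 : EuclideanSpace ℝ (Fin d)) = 0 := by
  ext i
  show (if i ∈ K then (0 : EuclideanSpace ℝ (Fin d)) i else 0) = (0 : EuclideanSpace ℝ (Fin d)) i
  simp

lemma restr_empty (y : EuclideanSpace ℝ (Fin d)) : restr (∅ : Finset (Fin d)) y = 0 := by
  ext i
  show (if i ∈ (∅ : Finset (Fin d)) then y i else 0) = (0 : EuclideanSpace ℝ (Fin d)) i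
  simp

lemma gaugeNorm_zero_right (k : ℕ) : gaugeNorm k (0 : EuclideanSpace ℝ (Fin d)) = 0 := by
  refine le_antisymm (gaugeNorm_le fun K _ => by simp [restr_zero]) ?_
  simpa [restr_zero] using le_gaugeNorm (y := (0 : EuclideanSpace ℝ (Fin d)))
    (k := k) (K := (∅ : Finset (Fin d))) (Nat.zero_le k)

lemma gaugeNorm_zero_left (y : EuclideanSpace ℝ (Fin d)) : gaugeNorm 0 y = 0 := by
  refine le_antisymm (gaugeNorm_le fun K hK => ?_) ?_
  · rw [Finset.card_eq_zero.mp (Nat.le_zero.mp hK), restr_empty]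
    simp
  · simpa [restr_empty] using le_gaugeNorm (y := y) (k := 0) (K := (∅ : Finset (Fin d))) le_rfl

lemma conj_bdd (y : EuclideanSpace ℝ (Fin d)) :
    BddAbove (Set.range fun l : Fin (d + 1) => gaugeNorm (l : ℕ) y - ((l : ℕ) : ℝ)) :=
  Set.Finite.bddAbove (Set.finite_range _)

lemma capraConjL0_nonneg (y : EuclideanSpace ℝ (Fin d)) : 0 ≤ capraConjL0 y := by
  have h := le_ciSup (conj_bdd y) (0 : Fin (d + 1))
  simpa [capraConjL0, gaugeNorm_zero_left] using h

lemma le_capraConjL0 {l : ℕ} (hl : l ≤ d) (y : EuclideanSpace ℝ (Fin d)) :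
    gaugeNorm l y - (l : ℝ) ≤ capraConjL0 y := by
  have h := le_ciSup (conj_bdd y) (⟨l, by omega⟩ : Fin (d + 1))
  simpa [capraConjL0] using h

lemma capraConjL0_zero : capraConjL0 (0 : EuclideanSpace ℝ (Fin d)) = 0 := by
  refine le_antisymm (ciSup_le fun l => ?_) (capraConjL0_nonneg 0)
  simp [gaugeNorm_zero_right]

lemma L0_nonneg (x : EuclideanSpace ℝ (Fin d)) : 0 ≤ L0 x := by
  have h := le_iSup (fun y : EuclideanSpace ℝ (Fin d) =>
    (((inner ℝ x y : ℝ) - capraConjL0 y : ℝ) : EReal)) 0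
  simpa [L0, capraConjL0_zero] using h

lemma L0_zero : L0 (0 : EuclideanSpace ℝ (Fin d)) = 0 := by
  refine le_antisymm (iSup_le fun y => ?_) (L0_nonneg 0)
  have h1 : (inner ℝ (0 : EuclideanSpace ℝ (Fin d)) y : ℝ) - capraConjL0 y ≤ 0 := by
    have := capraConjL0_nonneg y; simp [inner_zero_left]; linarith
  exact_mod_cast EReal.coe_le_coe_iff.mpr h1 |>.trans_eq EReal.coe_zero


lemma L0_convex (x z : EuclideanSpace ℝ (Fin d)) (a b : ℝ) (ha : 0 ≤ a) (hb : 0 ≤ b)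
    (hab : a + b = 1) :
    L0 (a • x + b • z) ≤ (a : EReal) * L0 x + (b : EReal) * L0 z := by
  refine iSup_le fun y => ?_
  have hx : (((inner ℝ x y : ℝ) - capraConjL0 y : ℝ) : EReal) ≤ L0 x :=
    le_iSup (fun y : EuclideanSpace ℝ (Fin d) =>
      (((inner ℝ x y : ℝ) - capraConjL0 y : ℝ) : EReal)) y
  have hz : (((inner ℝ z y : ℝ) - capraConjL0 y : ℝ) : EReal) ≤ L0 z :=
    le_iSup (fun y : EuclideanSpace ℝ (Fin d) =>
      (((inner ℝ z y : ℝ) - capraConjL0 y : ℝ) : EReal)) y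
  have hinner : (inner ℝ (a • x + b • z) y : ℝ) = a * inner ℝ x y + b * inner ℝ z y := by
    rw [inner_add_left, real_inner_smul_left, real_inner_smul_left]
  have key : (inner ℝ (a • x + b • z) y : ℝ) - capraConjL0 y
      = a * ((inner ℝ x y : ℝ) - capraConjL0 y) + b * ((inner ℝ z y : ℝ) - capraConjL0 y) := by
    rw [hinner]; nlinarith [capraConjL0_nonneg y]
  rw [key, EReal.coe_add, EReal.coe_mul, EReal.coe_mul]
  exact add_le_add
    (mul_le_mul_of_nonneg_left hx (EReal.coe_nonneg.mpr ha))
    (mul_le_mul_of_nonneg_left hz (EReal.coe_nonneg.mpr hb))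

lemma L0_lsc : LowerSemicontinuous (L0 (d := d)) := by
  apply lowerSemicontinuous_iSup
  intro y
  apply Continuous.lowerSemicontinuous
  exact continuous_coe_real_ereal.comp
    (((continuous_id.inner continuous_const)).sub continuous_const)

lemma inner_eq_sum (x y : EuclideanSpace ℝ (Fin d)) : (inner ℝ x y : ℝ) = ∑ i, x i * y i := by
  simp [PiLp.inner_apply, RCLike.inner_apply, conj_trivial, mul_comm]

lemma sq_sum_eq (x : EuclideanSpace ℝ (Fin d)) : ∑ i, x i ^ 2 = ‖x‖ ^ 2 := by
  rw [EuclideanSpace.norm_eq, Real.sq_sqrt (by positivity)]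
  simp [Real.norm_eq_abs, sq_abs]

lemma l0_eq_L0_on_sphere (x : EuclideanSpace ℝ (Fin d)) (hx : ‖x‖ = 1) :
    ((l0 x : ℕ) : EReal) = L0 x := by
  classical
  set S : Finset (Fin d) := Finset.univ.filter (fun i => x i ≠ 0) with hS
  have hSx : ∀ i, i ∉ S → x i = 0 := by
    intro i hi; by_contra h; exact hi (by simp [hS, h])
  have hcard : S.card = l0 x := rfl
  have hkd : l0 x ≤ d := by
    have h := Finset.card_filter_le (Finset.univ : Finset (Fin d)) (fun i => x i ≠ 0)
    simpa [l0] using h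
  set k : ℕ := l0 x with hk
  have hsum : ∑ i, x i ^ 2 = 1 := by rw [sq_sum_eq, hx]; norm_num
  have hub : L0 x ≤ ((k : ℝ) : EReal) := by
    refine iSup_le fun y => ?_
    rw [EReal.coe_le_coe_iff]
    have h1 : gaugeNorm k y - (k : ℝ) ≤ capraConjL0 y := le_capraConjL0 hkd y
    have h2 : (inner ℝ x y : ℝ) = inner ℝ x (restr S y) := by
      rw [inner_eq_sum, inner_eq_sum]
      refine Finset.sum_congr rfl fun i _ => ?_
      show x i * y i = x i * (if i ∈ S then y i else 0)
      by_cases hi : i ∈ S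
      · simp [hi]
      · simp [hi, hSx i hi]
    have h3 : (inner ℝ x y : ℝ) ≤ gaugeNorm k y := by
      rw [h2]
      calc (inner ℝ x (restr S y) : ℝ) ≤ ‖x‖ * ‖restr S y‖ := real_inner_le_norm _ _
        _ = ‖restr S y‖ := by rw [hx, one_mul]
        _ ≤ gaugeNorm k y := le_gaugeNorm (le_of_eq hcard)
    linarith
  have hxne : x ≠ 0 := by intro h; rw [h, norm_zero] at hx; norm_num at hx
  have hSne : S.Nonempty := by
    by_contra h
    apply hxne
    ext i
    have h2 := hSx i (by simp [Finset.not_nonempty_iff_eq_empty.mp h])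
    simpa using h2
  set m : ℝ := S.inf' hSne (fun i => x i ^ 2) with hm
  have hmpos : 0 < m := by
    rw [hm, Finset.lt_inf'_iff]
    intro i hi
    have h2 : x i ≠ 0 := by simpa [hS] using hi
    positivity
  have hmle : ∀ j ∈ S, m ≤ x j ^ 2 := fun j hj => Finset.inf'_le _ hj
  have hm1 : m ≤ 1 := by
    obtain ⟨j, hj⟩ := hSne
    have h1 := hmle j hj
    have h2 : x j ^ 2 ≤ ∑ i, x i ^ 2 :=
      Finset.single_le_sum (fun i _ => sq_nonneg (x i)) (Finset.mem_univ j)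
    linarith
  have hA : ∀ K : Finset (Fin d), K.card < k → ‖restr K x‖ ≤ 1 - m / 2 := by
    intro K hKk
    have hns : ¬ S ⊆ K := fun h => absurd (Finset.card_le_card h) (by omega)
    obtain ⟨j, hjS, hjK⟩ := Finset.not_subset.mp hns
    have hKsub : K ⊆ Finset.univ.erase j :=
      fun i hi => Finset.mem_erase.mpr ⟨fun h => hjK (h ▸ hi), Finset.mem_univ i⟩
    have hsq : ∑ i ∈ K, x i ^ 2 ≤ 1 - m := by
      have h1 : ∑ i ∈ K, x i ^ 2 ≤ ∑ i ∈ Finset.univ.erase j, x i ^ 2 :=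
        Finset.sum_le_sum_of_subset_of_nonneg hKsub (fun i _ _ => sq_nonneg _)
      rw [Finset.sum_erase_eq_sub (Finset.mem_univ j), hsum] at h1
      have h2 := hmle j hjS
      linarith
    rw [norm_restr]
    calc Real.sqrt (∑ i ∈ K, x i ^ 2) ≤ Real.sqrt ((1 - m/2)^2) := by
          apply Real.sqrt_le_sqrt; nlinarith
      _ = 1 - m/2 := Real.sqrt_sq (by linarith)
  set t : ℝ := 2 * k / m with ht
  have htnn : 0 ≤ t := by positivity
  have htk : t * (m/2) = k := by
    rw [ht, div_mul_div_comm, div_eq_iff (mul_pos hmpos two_pos).ne']; ring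
  have hconj : capraConjL0 (t • x) ≤ t - k := by
    refine ciSup_le fun l => ?_
    have hgl : gaugeNorm (l : ℕ) (t • x) ≤ t - k + l := by
      refine gaugeNorm_le fun K hK => ?_
      have hres : restr K (t • x) = t • restr K x := by
        ext i
        show (if i ∈ K then (t • x) i else 0) = (t • restr K x) i
        show (if i ∈ K then (t • x) i else 0) = t * (if i ∈ K then x i else 0)
        split <;> simp [PiLp.smul_apply, smul_eq_mul]
      rw [hres, norm_smul, Real.norm_eq_abs, abs_of_nonneg htnn]
      by_cases hlk : (l : ℕ) < k
      · have hKk : K.card < k := lt_of_le_of_lt hK hlk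
        have h1 : t * ‖restr K x‖ ≤ t * (1 - m/2) :=
          mul_le_mul_of_nonneg_left (hA K hKk) htnn
        have h2 : t * (1 - m/2) = t - k := by rw [mul_sub, mul_one, htk]
        have hl0 : (0:ℝ) ≤ ((l : ℕ) : ℝ) := Nat.cast_nonneg _
        linarith
      · push_neg at hlk
        have h1 : ‖restr K x‖ ≤ 1 := by rw [← hx]; exact norm_restr_le_norm K x
        have h2 : t * ‖restr K x‖ ≤ t := by nlinarith
        have h3 : (k:ℝ) ≤ ((l : ℕ) : ℝ) := by exact_mod_cast hlk
        linarith
    linarith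
  have hlb : ((k:ℝ) : EReal) ≤ L0 x := by
    have hterm : (k:ℝ) ≤ (inner ℝ x (t • x) : ℝ) - capraConjL0 (t • x) := by
      have h2 : (inner ℝ x (t • x) : ℝ) = t := by
        rw [real_inner_smul_right, real_inner_self_eq_norm_sq x, hx]; ring
      rw [h2]; linarith
    calc ((k:ℝ):EReal) ≤ (((inner ℝ x (t • x) : ℝ) - capraConjL0 (t • x) : ℝ) : EReal) :=
          EReal.coe_le_coe_iff.mpr hterm
      _ ≤ L0 x := le_iSup (fun y : EuclideanSpace ℝ (Fin d) =>
            (((inner ℝ x y : ℝ) - capraConjL0 y : ℝ) : EReal)) (t • x)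
  have hfin : ((k : ℝ) : EReal) = L0 x := le_antisymm hlb hub
  rw [← hfin]
  norm_cast


end L0AuxSection

open L0AuxSection in
/-- `L₀(x) = sup_y (⟨x,y⟩ − max_{0 ≤ l ≤ d}(‖y‖_(l) − l))` is a proper
convex lower semicontinuous function on `ℝ^d`, and ℓ₀ coincides with `L₀` on the
Euclidean unit sphere. -/
theorem L0_proper_convex_lsc_and_l0_eq_L0_on_sphere (d : ℕ) (hd : 1 ≤ d) :
    ((∀ x : EuclideanSpace ℝ (Fin d), L0 x ≠ ⊥) ∧
      (∃ x : EuclideanSpace ℝ (Fin d), L0 x ≠ ⊤)) ∧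
    (∀ x z : EuclideanSpace ℝ (Fin d), ∀ a b : ℝ, 0 ≤ a → 0 ≤ b → a + b = 1 →
        L0 (a • x + b • z) ≤ (a : EReal) * L0 x + (b : EReal) * L0 z) ∧
    LowerSemicontinuous (L0 (d := d)) ∧
    (∀ x : EuclideanSpace ℝ (Fin d), ‖x‖ = 1 → (l0 x : EReal) = L0 x) := by
  refine ⟨⟨fun x => ?_, ⟨0, ?_⟩⟩, fun x z a b ha hb hab => L0_convex x z a b ha hb hab,
    L0_lsc, fun x hx => l0_eq_L0_on_sphere x hx⟩
  · exact ((lt_of_lt_of_le EReal.bot_lt_zero (L0_nonneg x)).ne')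
  · rw [L0_zero]
    exact ne_of_lt EReal.zero_lt_top
end
end

section
/- Fix d ≥ 1 and define L₀ : ℝ^d → ℝ̄ by L₀(x) = sup_{y ∈ ℝ^d} ( ⟨x,y⟩ − max_{l ∈ {0,1,…,d}} ( ‖y‖_(l) − l ) ). Then the ℓ0 pseudonorm is the composition of L₀ with the Euclidean normalization mapping: ℓ0(x) = L₀( x / ‖x‖ ) for every x ∈ ℝ^d with x ≠ 0. -/
noncomputable section

variable {d : ℕ}

instance (k : ℕ) : Nonempty {K : Finset (Fin d) // K.card ≤ k} := ⟨⟨∅, by simp⟩⟩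

lemma restr_apply (K : Finset (Fin d)) (x : EuclideanSpace ℝ (Fin d)) (i : Fin d) :
    restr K x i = if i ∈ K then x i else 0 := rfl

lemma norm_restr_le (K : Finset (Fin d)) (y : EuclideanSpace ℝ (Fin d)) :
    ‖restr K y‖ ≤ ‖y‖ := by
  rw [EuclideanSpace.norm_eq, EuclideanSpace.norm_eq]
  apply Real.sqrt_le_sqrt
  apply Finset.sum_le_sum
  intro i _
  rw [restr_apply]
  split
  · exact le_rfl
  · simpa using sq_nonneg ‖y i‖

lemma gauge_bdd (k : ℕ) (y : EuclideanSpace ℝ (Fin d)) :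
    BddAbove (Set.range fun K : {K : Finset (Fin d) // K.card ≤ k} =>
      ‖restr (K : Finset (Fin d)) y‖) :=
  Set.Finite.bddAbove (Set.finite_range _)

lemma le_gauge {k : ℕ} {K : Finset (Fin d)} (h : K.card ≤ k) (y : EuclideanSpace ℝ (Fin d)) :
    ‖restr K y‖ ≤ gaugeNorm k y :=
  le_ciSup (gauge_bdd k y) ⟨K, h⟩

lemma gauge_le {k : ℕ} {c : ℝ} {y : EuclideanSpace ℝ (Fin d)}
    (h : ∀ K : Finset (Fin d), K.card ≤ k → ‖restr K y‖ ≤ c) : gaugeNorm k y ≤ c :=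
  ciSup_le fun K => h K K.2

lemma gauge_le_norm (k : ℕ) (y : EuclideanSpace ℝ (Fin d)) : gaugeNorm k y ≤ ‖y‖ :=
  gauge_le fun K _ => norm_restr_le K y

lemma gaugeNorm_mono {k₁ k₂ : ℕ} (h : k₁ ≤ k₂) (y : EuclideanSpace ℝ (Fin d)) :
    gaugeNorm k₁ y ≤ gaugeNorm k₂ y :=
  gauge_le fun _ hK => le_gauge (hK.trans h) y

lemma restr_smul (K : Finset (Fin d)) (t : ℝ) (y : EuclideanSpace ℝ (Fin d)) :
    restr K (t • y) = t • restr K y := by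
  ext i
  simp only [restr_apply, PiLp.smul_apply, smul_eq_mul]
  split <;> simp

lemma gaugeNorm_smul {t : ℝ} (ht : 0 ≤ t) (k : ℕ) (y : EuclideanSpace ℝ (Fin d)) :
    gaugeNorm k (t • y) = t * gaugeNorm k y := by
  unfold gaugeNorm
  simp_rw [restr_smul, norm_smul, Real.norm_eq_abs, abs_of_nonneg ht]
  exact (Real.mul_iSup_of_nonneg ht _).symm

lemma le_conj {l : ℕ} (hl : l ≤ d) (y : EuclideanSpace ℝ (Fin d)) :
    gaugeNorm l y - (l : ℝ) ≤ capraConjL0 y := by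
  have := le_ciSup (f := fun l : Fin (d + 1) => gaugeNorm (l : ℕ) y - ((l : ℕ) : ℝ))
    (Set.Finite.bddAbove (Set.finite_range _)) ⟨l, by omega⟩
  exact this

lemma conj_le {c : ℝ} {y : EuclideanSpace ℝ (Fin d)}
    (h : ∀ l : ℕ, l ≤ d → gaugeNorm l y - (l : ℝ) ≤ c) : capraConjL0 y ≤ c :=
  ciSup_le fun l => h l (by omega)

lemma norm_sq_sum (v : EuclideanSpace ℝ (Fin d)) : ‖v‖ ^ 2 = ∑ j, v j ^ 2 := by
  rw [EuclideanSpace.norm_eq, Real.sq_sqrt (Finset.sum_nonneg fun i _ => sq_nonneg _)]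
  simp [Real.norm_eq_abs, sq_abs]


/-- the ℓ₀ pseudonorm is the composition of `L₀` with the Euclidean
normalization mapping: `ℓ₀(x) = L₀(x/‖x‖)` for every `x ≠ 0`. -/
theorem l0_eq_L0_comp_normalization (d : ℕ) (hd : 1 ≤ d)
    (x : EuclideanSpace ℝ (Fin d)) (hx : x ≠ 0) :
    (l0 x : EReal) = L0 (‖x‖⁻¹ • x) := by
  have hxn : (0 : ℝ) < ‖x‖ := norm_pos_iff.mpr hx
  set u : EuclideanSpace ℝ (Fin d) := ‖x‖⁻¹ • x with hu
  have hnu : ‖u‖ = 1 := by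
    rw [hu, norm_smul, norm_inv, norm_norm, inv_mul_cancel₀ hxn.ne']
  set K : Finset (Fin d) := Finset.univ.filter (fun i => x i ≠ 0) with hKdef
  set k : ℕ := K.card with hkdef
  have hl0 : l0 x = k := rfl
  have hxu : ∀ i, u i = ‖x‖⁻¹ * x i := fun i => rfl
  have hu_zero : ∀ i, i ∉ K → u i = 0 := by
    intro i hi
    have hxi : x i = 0 := by simpa [hKdef] using hi
    simp [hxu, hxi]
  have hu_ne : ∀ i ∈ K, u i ≠ 0 := by
    intro i hi
    have hxi : x i ≠ 0 := by simpa [hKdef] using hi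
    rw [hxu]
    exact mul_ne_zero (inv_ne_zero hxn.ne') hxi
  have hrestrK : restr K u = u := by
    ext i
    rw [restr_apply]
    split
    · rfl
    · exact (hu_zero i ‹_›).symm
  have hkpos : 0 < k := by
    rw [hkdef, Finset.card_pos]
    by_contra h
    rw [Finset.not_nonempty_iff_eq_empty, Finset.eq_empty_iff_forall_notMem] at h
    apply hx
    ext i
    have := h i
    simpa [hKdef] using this
  have hkd : k ≤ d := by
    have := Finset.card_le_univ K
    simpa [hkdef] using this
  -- upper bound
  have hub : ∀ y : EuclideanSpace ℝ (Fin d),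
      (inner ℝ u y : ℝ) - capraConjL0 y ≤ (k : ℝ) := by
    intro y
    have h1 : (inner ℝ u y : ℝ) = (inner ℝ u (restr K y) : ℝ) := by
      simp only [PiLp.inner_apply, RCLike.inner_apply, conj_trivial]
      apply Finset.sum_congr rfl
      intro i _
      rw [restr_apply]
      split
      · rfl
      · rw [hu_zero i ‹_›]; ring
    have h2 : (inner ℝ u (restr K y) : ℝ) ≤ ‖restr K y‖ := by
      calc (inner ℝ u (restr K y) : ℝ) ≤ ‖u‖ * ‖restr K y‖ := real_inner_le_norm _ _
        _ = ‖restr K y‖ := by rw [hnu, one_mul]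
    have h3 : ‖restr K y‖ ≤ gaugeNorm k y := le_gauge le_rfl y
    have h4 : gaugeNorm k y - (k : ℝ) ≤ capraConjL0 y := le_conj hkd y
    rw [h1]
    linarith
  -- the constant c < 1
  set c : ℝ := gaugeNorm (k - 1) u with hc
  have hc0 : (0 : ℝ) ≤ c := (norm_nonneg _).trans (le_gauge (Finset.card_empty.trans_le (Nat.zero_le _)) u)
  have hc1 : c < 1 := by
    obtain ⟨K₀, hK₀⟩ := Finite.exists_max
      (fun K : {K : Finset (Fin d) // K.card ≤ k - 1} => ‖restr (K : Finset (Fin d)) u‖)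
    have hle : c ≤ ‖restr (K₀ : Finset (Fin d)) u‖ := ciSup_le hK₀
    have hcard : (K₀ : Finset (Fin d)).card < k := lt_of_le_of_lt K₀.2 (by omega)
    have hns : ¬ K ⊆ (K₀ : Finset (Fin d)) := fun h =>
      absurd (Finset.card_le_card h) (by omega)
    obtain ⟨i, hiK, hiK₀⟩ := Finset.not_subset.mp hns
    have hui : u i ≠ 0 := hu_ne i hiK
    have huipos : 0 < u i ^ 2 :=
      lt_of_le_of_ne (sq_nonneg _) (Ne.symm (pow_ne_zero 2 hui))
    have hnorm : ‖restr (K₀ : Finset (Fin d)) u‖ < 1 := by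
      have hsq : ‖restr (K₀ : Finset (Fin d)) u‖ ^ 2 < 1 := by
        rw [norm_sq_sum]
        have e2 : ∑ j, u j ^ 2 = 1 := by rw [← norm_sq_sum, hnu]; norm_num
        have hze : restr (K₀ : Finset (Fin d)) u i ^ 2 = 0 := by
          rw [restr_apply, if_neg hiK₀]
          norm_num
        have step1 : ∑ j, restr (K₀ : Finset (Fin d)) u j ^ 2
            = ∑ j ∈ Finset.univ.erase i, restr (K₀ : Finset (Fin d)) u j ^ 2 :=
          (Finset.sum_erase (f := fun j => restr (K₀ : Finset (Fin d)) u j ^ 2)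
            Finset.univ hze).symm
        have step2 : ∑ j ∈ Finset.univ.erase i, restr (K₀ : Finset (Fin d)) u j ^ 2
            ≤ ∑ j ∈ Finset.univ.erase i, u j ^ 2 := by
          apply Finset.sum_le_sum
          intro j _
          rw [restr_apply]
          split
          · exact le_rfl
          · simpa using sq_nonneg (u j)
        have step3 : ∑ j ∈ Finset.univ.erase i, u j ^ 2 + u i ^ 2 = ∑ j, u j ^ 2 :=
          Finset.sum_erase_add _ _ (Finset.mem_univ i)
        rw [step1]
        linarith
      exact lt_of_pow_lt_pow_left₀ 2 zero_le_one (by rw [one_pow]; exact hsq)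
    exact lt_of_le_of_lt hle hnorm
  have h1c : (0 : ℝ) < 1 - c := by linarith
  set t : ℝ := (k : ℝ) / (1 - c) with ht
  have ht0 : (0 : ℝ) ≤ t := div_nonneg (Nat.cast_nonneg k) h1c.le
  have htc : t * (1 - c) = (k : ℝ) := div_mul_cancel₀ _ h1c.ne'
  have htc' : t * c = t - (k : ℝ) := by linear_combination -htc
  set y0 : EuclideanSpace ℝ (Fin d) := t • u with hy0
  have hinner0 : (inner ℝ u y0 : ℝ) = t := by
    rw [hy0, real_inner_smul_right, real_inner_self_eq_norm_sq, hnu]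
    ring
  have hconj0 : capraConjL0 y0 ≤ t - (k : ℝ) := by
    apply conj_le
    intro l hl
    rw [hy0, gaugeNorm_smul ht0]
    by_cases hlk : k ≤ l
    · have hg1 : gaugeNorm l u ≤ 1 := (gauge_le_norm l u).trans_eq hnu
      have h5 : t * gaugeNorm l u ≤ t := by nlinarith
      have h6 : (k : ℝ) ≤ (l : ℝ) := Nat.cast_le.mpr hlk
      linarith
    · have hll : l ≤ k - 1 := by omega
      have hg : gaugeNorm l u ≤ c := gaugeNorm_mono hll u
      have h5 : t * gaugeNorm l u ≤ t * c := by nlinarith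
      have hl0' : (0 : ℝ) ≤ (l : ℝ) := Nat.cast_nonneg l
      linarith
  have hlow : (k : ℝ) ≤ (inner ℝ u y0 : ℝ) - capraConjL0 y0 := by
    rw [hinner0]; linarith
  -- assemble in EReal
  have hcast : (l0 x : EReal) = ((k : ℝ) : EReal) := by
    rw [hl0]; norm_cast
  rw [hcast]
  rw [L0]
  apply le_antisymm
  · refine le_trans ?_ (le_iSup
      (fun y : EuclideanSpace ℝ (Fin d) => (((inner ℝ u y : ℝ) - capraConjL0 y : ℝ) : EReal)) y0)
    exact_mod_cast hlow
  · exact iSup_le fun y => by exact_mod_cast hub y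
end
end

section
/- Let d = 2 and define L₀ : ℝ² → ℝ̄ by L₀(x) = sup_{y ∈ ℝ²} ( ⟨x,y⟩ − max_{l ∈ {0,1,2}} ( ‖y‖_(l) − l ) ). Then for every x = (x₁,x₂) ∈ ℝ² with x₁² + x₂² < 1 and |x₁| + |x₂| ≤ 1, one has L₀(x₁,x₂) = |x₁| + |x₂|. -/
noncomputable section

variable {d : ℕ}

-- auxiliary lemmas
lemma norm_restr_eq (K : Finset (Fin 2)) (y : EuclideanSpace ℝ (Fin 2)) :
    ‖restr K y‖ = Real.sqrt ((if (0:Fin 2) ∈ K then (y 0)^2 else 0)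
      + (if (1:Fin 2) ∈ K then (y 1)^2 else 0)) := by
  rw [EuclideanSpace.norm_eq, Fin.sum_univ_two]
  simp only [restr]
  congr 1
  split_ifs <;> simp [sq_abs, Real.norm_eq_abs]

lemma gauge0 (y : EuclideanSpace ℝ (Fin d)) : gaugeNorm 0 y = 0 := by
  unfold gaugeNorm
  have h : ∀ K : {K : Finset (Fin d) // K.card ≤ 0},
      ‖restr (K : Finset (Fin d)) y‖ = 0 := by
    rintro ⟨K, hK⟩
    have : K = ∅ := Finset.card_eq_zero.mp (Nat.le_zero.mp hK)
    subst this
    have : restr (∅ : Finset (Fin d)) y = 0 := by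
      ext i; simp [restr]
    rw [this, norm_zero]
  haveI : Nonempty {K : Finset (Fin d) // K.card ≤ 0} := ⟨⟨∅, by simp⟩⟩
  simp only [h]
  exact ciSup_const

lemma le_capraConj (y : EuclideanSpace ℝ (Fin d)) (l : Fin (d + 1)) :
    gaugeNorm (l : ℕ) y - ((l : ℕ) : ℝ) ≤ capraConjL0 y :=
  le_ciSup (f := fun l : Fin (d + 1) => gaugeNorm (l : ℕ) y - ((l : ℕ) : ℝ))
    (Set.finite_range _).bddAbove l

lemma capraConj_nonneg (y : EuclideanSpace ℝ (Fin d)) : 0 ≤ capraConjL0 y := by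
  have := le_capraConj y 0
  simpa [gauge0] using this

lemma abs_le_gauge1 (y : EuclideanSpace ℝ (Fin 2)) (i : Fin 2) :
    |y i| ≤ gaugeNorm 1 y := by
  have h : ‖restr ({i} : Finset (Fin 2)) y‖ = |y i| := by
    rw [norm_restr_eq]
    fin_cases i <;> simp [Real.sqrt_sq_eq_abs]
  calc |y i| = ‖restr ({i} : Finset (Fin 2)) y‖ := h.symm
    _ ≤ gaugeNorm 1 y :=
        le_ciSup (gauge_bdd 1 y) (⟨{i}, by simp⟩ : {K : Finset (Fin 2) // K.card ≤ 1})

lemma inner_two (x y : EuclideanSpace ℝ (Fin 2)) :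
    (inner ℝ x y : ℝ) = x 0 * y 0 + x 1 * y 1 := by
  simp [PiLp.inner_apply, RCLike.inner_apply, Fin.sum_univ_two, mul_comm]

/-- in dimension `d = 2`, for `x` with `x₁² + x₂² < 1` and
`|x₁| + |x₂| ≤ 1`, one has `L₀(x₁,x₂) = |x₁| + |x₂|`. -/
theorem L0_formula_dim2_lozenge (x : EuclideanSpace ℝ (Fin 2))
    (h1 : (x 0) ^ 2 + (x 1) ^ 2 < 1) (h2 : |x 0| + |x 1| ≤ 1) :
    L0 x = ((|x 0| + |x 1| : ℝ) : EReal) := by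
  classical
  set c : ℝ := |x 0| + |x 1| with hc
  -- upper bound per y
  have hub : ∀ y : EuclideanSpace ℝ (Fin 2), (inner ℝ x y : ℝ) - capraConjL0 y ≤ c := by
    intro y
    set A := capraConjL0 y with hA
    have hA0 : 0 ≤ A := capraConj_nonneg y
    have hy0 : |y 0| ≤ 1 + A := by
      have h1' := abs_le_gauge1 y 0
      have h2' := le_capraConj y 1
      simp only [Fin.val_one, Nat.cast_one] at h2'
      linarith
    have hy1 : |y 1| ≤ 1 + A := by
      have h1' := abs_le_gauge1 y 1
      have h2' := le_capraConj y 1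
      simp only [Fin.val_one, Nat.cast_one] at h2'
      linarith
    have e0 : x 0 * y 0 ≤ |x 0| * (1 + A) := by
      calc x 0 * y 0 ≤ |x 0 * y 0| := le_abs_self _
        _ = |x 0| * |y 0| := abs_mul _ _
        _ ≤ |x 0| * (1 + A) := mul_le_mul_of_nonneg_left hy0 (abs_nonneg _)
    have e1 : x 1 * y 1 ≤ |x 1| * (1 + A) := by
      calc x 1 * y 1 ≤ |x 1 * y 1| := le_abs_self _
        _ = |x 1| * |y 1| := abs_mul _ _
        _ ≤ |x 1| * (1 + A) := mul_le_mul_of_nonneg_left hy1 (abs_nonneg _)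
    rw [inner_two]
    nlinarith [mul_nonneg hA0 (sub_nonneg.mpr h2)]
  -- the optimal point
  set y₀ : EuclideanSpace ℝ (Fin 2) := WithLp.toLp 2 (fun i => if x i < 0 then (-1 : ℝ) else 1) with hy₀
  have hy₀i : ∀ i, y₀ i = if x i < 0 then -1 else 1 := fun i => rfl
  have hy₀sq : ∀ i : Fin 2, (y₀ i) ^ 2 = 1 := by
    intro i; rw [hy₀i]; split_ifs <;> norm_num
  have hxy₀ : (inner ℝ x y₀ : ℝ) = c := by
    rw [inner_two, hc]
    have : ∀ i : Fin 2, x i * y₀ i = |x i| := by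
      intro i; rw [hy₀i]; split_ifs with h
      · rw [abs_of_neg h]; ring
      · rw [abs_of_nonneg (not_lt.mp h)]; ring
    rw [this 0, this 1]
  have hconj₀ : capraConjL0 y₀ ≤ 0 := by
    apply ciSup_le
    intro l
    have hbound : ∀ k : ℕ, ∀ K : {K : Finset (Fin 2) // K.card ≤ k},
        ‖restr (K : Finset (Fin 2)) y₀‖ ≤ Real.sqrt 2 := by
      rintro k ⟨K, hK⟩
      rw [norm_restr_eq]
      apply Real.sqrt_le_sqrt
      have s0 : (if (0:Fin 2) ∈ K then (y₀ 0)^2 else 0) ≤ 1 := by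
        split_ifs <;> simp [hy₀sq]
      have s1 : (if (1:Fin 2) ∈ K then (y₀ 1)^2 else 0) ≤ 1 := by
        split_ifs <;> simp [hy₀sq]
      linarith
    fin_cases l
    · simp [gauge0]
    · -- l = 1 : gaugeNorm 1 y₀ ≤ 1
      simp only [Fin.val_one, Nat.cast_one]
      have : gaugeNorm 1 y₀ ≤ 1 := by
        apply ciSup_le
        rintro ⟨K, hK⟩
        rw [norm_restr_eq]
        by_cases h0 : (0:Fin 2) ∈ K <;> by_cases h1 : (1:Fin 2) ∈ K
        · exfalso
          have hsub : ({0, 1} : Finset (Fin 2)) ⊆ K := by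
            intro i hi
            fin_cases i <;> assumption
          have := Finset.card_le_card hsub
          simp at this
          omega
        · simp only [if_pos h0, if_neg h1, add_zero, hy₀sq]
          simp
        · simp only [if_neg h0, if_pos h1, zero_add, hy₀sq]
          simp
        · simp only [if_neg h0, if_neg h1, add_zero]
          simp
      linarith
    · -- l = 2 : gaugeNorm 2 y₀ ≤ 2
      have h2' : gaugeNorm 2 y₀ ≤ Real.sqrt 2 := ciSup_le (hbound 2)
      have hs2 : Real.sqrt 2 ≤ 2 := by
        nlinarith [Real.sq_sqrt (by norm_num : (0:ℝ) ≤ 2), Real.sqrt_nonneg 2]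
      simp only [Fin.val_two]
      push_cast
      linarith
  have hlow : c ≤ (inner ℝ x y₀ : ℝ) - capraConjL0 y₀ := by
    rw [hxy₀]; linarith
  -- conclude
  unfold L0
  apply le_antisymm
  · apply iSup_le
    intro y
    exact_mod_cast EReal.coe_le_coe_iff.mpr (hub y)
  · calc ((c : ℝ) : EReal) ≤ (((inner ℝ x y₀ : ℝ) - capraConjL0 y₀ : ℝ) : EReal) :=
          EReal.coe_le_coe_iff.mpr hlow
      _ ≤ _ := le_iSup (fun y : EuclideanSpace ℝ (Fin 2) =>
          (((inner ℝ x y : ℝ) - capraConjL0 y : ℝ) : EReal)) y₀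
end
end
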